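/- If (a,b) ∈ P₃, then the image H_Δ(a,b) = (a⁴, γ_{a,b}/a²) belongs to P = {(a,b) ∈ (1,2] × [1,2] : ab ≤ 2}, where γ_{a,b} = (ab + b − 2)/(a + 1 − ab). -/
import Mathlib


/-- The parameter region P₃. -/
def P3 : Set (ℝ × ℝ) :=
  {p | 1 < p.1 ∧ p.1 ≤ 2 ∧ 1 ≤ p.2 ∧ p.2 ≤ 2 ∧ p.1 * p.2 ≤ 2 ∧
    (2 + p.1 ^ 2 + p.1 ^ 3) / (1 + p.1 + p.1 ^ 3) ≤ p.2 ∧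
    p.2 ≤ 2 * (1 + p.1 + p.1 ^ 3) / (p.1 * (2 + p.1 ^ 2 + p.1 ^ 3))}

/-- The parameter region P. -/
def Pset : Set (ℝ × ℝ) :=
  {p | 1 < p.1 ∧ p.1 ≤ 2 ∧ 1 ≤ p.2 ∧ p.2 ≤ 2 ∧ p.1 * p.2 ≤ 2}

/-- The renormalization operator H_Δ. -/
noncomputable def HDelta (p : ℝ × ℝ) : ℝ × ℝ :=
  (p.1 ^ 4, (p.1 * p.2 + p.2 - 2) / (p.1 + 1 - p.1 * p.2) / p.1 ^ 2)

theorem HDelta_maps_P3_into_P : ∀ p ∈ P3, HDelta p ∈ Pset := by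
  rintro ⟨a, b⟩ ⟨ha1, ha2, hb1, hb2, hab, hL, hU⟩
  simp only [Pset, HDelta, Set.mem_setOf_eq]
  have ha0 : (0:ℝ) < a := by linarith
  have hd : 0 < a + 1 - a * b := by nlinarith
  have hden1 : (0:ℝ) < 1 + a + a ^ 3 := by positivity
  have hden2 : (0:ℝ) < a * (2 + a ^ 2 + a ^ 3) := by positivity
  have hL' : 2 + a ^ 2 + a ^ 3 ≤ b * (1 + a + a ^ 3) := by
    rwa [div_le_iff₀ hden1] at hL
  have hU' : b * (a * (2 + a ^ 2 + a ^ 3)) ≤ 2 * (1 + a + a ^ 3) := by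
    rwa [le_div_iff₀ hden2] at hU
  have h5 : a ^ 5 ≤ 2 := by
    nlinarith [mul_le_mul hL' hU' (by positivity) (by nlinarith),
      mul_pos ha0 ha0, sq_nonneg (a - 1), sq_nonneg a]
  have hpos : (0:ℝ) < (a + 1 - a * b) * a ^ 2 := by positivity
  refine ⟨by nlinarith, by nlinarith, ?_, ?_, ?_⟩
  · rw [div_div, le_div_iff₀ hpos]
    nlinarith [hL']
  · rw [div_div, div_le_iff₀ hpos]
    nlinarith [mul_le_mul_of_nonneg_left hU' (show (0:ℝ) ≤ 1 + a + 2 * a ^ 3 by positivity),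
      mul_nonneg (mul_nonneg (sub_nonneg.2 (show (1:ℝ) ≤ a ^ 5 from by nlinarith [pow_le_pow_left₀ zero_le_one ha1.le 5, one_pow (5:ℕ) (M := ℝ)])) (by positivity : (0:ℝ) ≤ 1 + a ^ 2)) (le_of_lt ha0)]
  · rw [div_div, ← mul_div_assoc, div_le_iff₀ hpos]
    have hkey : b * (a * (2 + a + a ^ 2)) ≤ 2 * (1 + a + a ^ 2) := by
      nlinarith [mul_le_mul_of_nonneg_left hU' (show (0:ℝ) ≤ 2 + a + a ^ 2 by positivity),
        mul_nonneg (mul_nonneg (mul_nonneg ha0.le (sub_nonneg.2 ha1.le)) (by positivity : (0:ℝ) ≤ 1 + a ^ 2)) ha0.le]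
    nlinarith [mul_le_mul_of_nonneg_left hkey (sq_nonneg a), sq_nonneg a, ha0]
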